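/- Let p be a real polynomial of degree at most 3. If p(−1) > 0, p(1) > 0, p'(−1) > 0 and p''(−1) > 0, then p(z) > 0 for all z ∈ [−1, 1]. -/

import Mathlib

lemma key13 (a0 a1 a2 a3 t : ℝ) (h0 : 0 < a0) (h1 : 0 < a1) (h2 : 0 < a2)
    (hP : 0 < a0 + 2*a1 + 4*a2 + 8*a3) (ht0 : 0 ≤ t) (ht2 : t ≤ 2) :
    0 < a0 + a1*t + a2*t^2 + a3*t^3 := by
  rcases eq_or_lt_of_le ht0 with h | h
  · rw [← h]; ring_nf; linarith
  · nlinarith [mul_pos (pow_pos h 3) hP,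
      mul_nonneg h0.le (by nlinarith [mul_nonneg (by linarith : (0:ℝ) ≤ 2 - t) (by nlinarith [sq_nonneg (t+1)] : (0:ℝ) ≤ t^2 + 2*t + 4)] : (0:ℝ) ≤ 8 - t^3),
      mul_nonneg (mul_nonneg h1.le ht0) (by nlinarith [mul_nonneg (by linarith : (0:ℝ) ≤ 2 - t) (by linarith : (0:ℝ) ≤ 2 + t)] : (0:ℝ) ≤ 4 - t^2),
      mul_nonneg (mul_nonneg h2.le (sq_nonneg t)) (by linarith : (0:ℝ) ≤ 2 - t)]

open Polynomial in
theorem stmt13 (p : Polynomial ℝ) (hdeg : p.degree ≤ 3)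
    (h1 : 0 < p.eval (-1)) (h2 : 0 < p.eval 1)
    (h3 : 0 < (derivative p).eval (-1))
    (h4 : 0 < (derivative (derivative p)).eval (-1)) :
    ∀ z ∈ Set.Icc (-1 : ℝ) 1, 0 < p.eval z := by
  set c0 := p.coeff 0
  set c1 := p.coeff 1
  set c2 := p.coeff 2
  set c3 := p.coeff 3
  have hnd : p.natDegree < 4 :=
    Nat.lt_succ_of_le (natDegree_le_iff_degree_le.2 (by exact_mod_cast hdeg))
  have hc4 : p.coeff 4 = 0 := coeff_eq_zero_of_natDegree_lt hnd
  have hc5 : p.coeff 5 = 0 := coeff_eq_zero_of_natDegree_lt (by omega)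
  have hev : ∀ x : ℝ, p.eval x = c0 + c1*x + c2*x^2 + c3*x^3 := by
    intro x
    rw [eval_eq_sum_range' hnd]
    simp [Finset.sum_range_succ]
    rfl
  have hnd' : (derivative p).natDegree < 4 :=
    lt_of_le_of_lt (natDegree_derivative_le p) (by omega)
  have hev' : ∀ x : ℝ, (derivative p).eval x = c1 + 2*c2*x + 3*c3*x^2 := by
    intro x
    rw [eval_eq_sum_range' hnd']
    simp [Finset.sum_range_succ, coeff_derivative, hc4]
    ring
  have hnd'' : (derivative (derivative p)).natDegree < 4 :=
    lt_of_le_of_lt (natDegree_derivative_le _) (by omega)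
  have hev'' : ∀ x : ℝ, (derivative (derivative p)).eval x = 2*c2 + 6*c3*x := by
    intro x
    rw [eval_eq_sum_range' hnd'']
    simp [Finset.sum_range_succ, coeff_derivative, hc4, hc5]
    ring
  rw [hev (-1)] at h1
  rw [hev 1] at h2
  rw [hev' (-1)] at h3
  rw [hev'' (-1)] at h4
  intro z hz
  obtain ⟨hz1, hz2⟩ := hz
  rw [hev z]
  have h := key13 (c0-c1+c2-c3) (c1-2*c2+3*c3) (c2-3*c3) c3 (z+1)
    (by linarith) (by linarith) (by linarith) (by linarith) (by linarith) (by linarith)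
  have heq : c0 + c1*z + c2*z^2 + c3*z^3 =
      (c0-c1+c2-c3) + (c1-2*c2+3*c3)*(z+1) + (c2-3*c3)*(z+1)^2 + c3*(z+1)^3 := by
    ring
  rw [heq]
  exact h
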